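/- There exists a constant C > 0, independent of the nodes and of f, such that the following holds: for every f ∈ C²([0,1]), if u ∈ C²([0,1]) satisfies −u''(x) = f(x) on (0,1) with u(0) = u(1) = 0, and if w = S⁻¹(W f̃) is the finite difference solution (with f̃_j = f(x_j)), and v_h : [0,1] → ℝ is the piecewise linear function with v_h(x_i) = w_i for 1 ≤ i ≤ n−1 and v_h(x_0) = v_h(x_n) = 0, then ( ∫₀¹ (u′(x) − v_h′(x))² dx )^{1/2} ≤ C·h·( ‖f″‖_∞ + ‖f‖_{L²(0,1)} ), where h = max_{1 ≤ i ≤ n} h_i. -/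

import Mathlib

open MeasureTheory

/-- The `(n-1) × (n-1)` tridiagonal stiffness matrix; the interior index `i : Fin (n-1)`
corresponds to the node `x (i+1)`, and `h_j = x j - x (j-1)`. -/
noncomputable def stiff (n : ℕ) (x : ℕ → ℝ) :
    Matrix (Fin (n - 1)) (Fin (n - 1)) ℝ := fun i j =>
  if (i : ℕ) = (j : ℕ) then
    1 / (x ((i : ℕ) + 1) - x (i : ℕ)) + 1 / (x ((i : ℕ) + 2) - x ((i : ℕ) + 1))
  else if (j : ℕ) = (i : ℕ) + 1 then -(1 / (x ((i : ℕ) + 2) - x ((i : ℕ) + 1)))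
  else if (i : ℕ) = (j : ℕ) + 1 then -(1 / (x ((i : ℕ) + 1) - x (i : ℕ)))
  else 0

/-- The `(n-1) × (n-1)` diagonal weight matrix with `W_{jj} = (h_j + h_{j+1})/2`,
where the interior index `j : Fin (n-1)` corresponds to the node `x (j+1)`. -/
noncomputable def weightMat (n : ℕ) (x : ℕ → ℝ) :
    Matrix (Fin (n - 1)) (Fin (n - 1)) ℝ :=
  Matrix.diagonal fun j : Fin (n - 1) => (x ((j : ℕ) + 2) - x (j : ℕ)) / 2

/-- Extension by zero: an interior-node vector `(v_1, …, v_{n-1})` extended to all node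
indices `0, 1, …, n` with `v_0 = v_n = 0`. -/
def extendVec (n : ℕ) (v : Fin (n - 1) → ℝ) : ℕ → ℝ := fun p =>
  if hp : 1 ≤ p ∧ p - 1 < n - 1 then v ⟨p - 1, hp.2⟩ else 0

lemma extendVec_eq (n : ℕ) (w : Fin (n-1) → ℝ) (q : ℕ) (h1 : 1 ≤ q) (h2 : q - 1 < n - 1) :
    extendVec n w q = w ⟨q-1, h2⟩ := dif_pos ⟨h1, h2⟩

lemma extendVec_zero (n : ℕ) (w : Fin (n-1) → ℝ) : extendVec n w 0 = 0 := by
  simp [extendVec]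

lemma extendVec_top (n : ℕ) (w : Fin (n-1) → ℝ) (q : ℕ) (h : n ≤ q) : extendVec n w q = 0 := by
  unfold extendVec
  rw [dif_neg]
  rintro ⟨h1, h2⟩
  omega

/-- reindex sum over Icc 1 n as range n -/
lemma sum_Icc_one {M : Type*} [AddCommMonoid M] (g : ℕ → M) (n : ℕ) :
    ∑ i ∈ Finset.Icc 1 n, g i = ∑ i ∈ Finset.range n, g (i+1) := by
  refine Finset.sum_nbij' (fun i => i - 1) (fun i => i + 1) ?_ ?_ ?_ ?_ ?_ <;>
      intro a ha <;> simp at ha ⊢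
  · omega
  · omega
  · omega
  · congr 1; omega

/-- FTC on [0,1] for derivatives within Icc 0 1. -/
lemma ftc01 {g g' : ℝ → ℝ}
    (hg : ∀ t ∈ Set.Icc (0:ℝ) 1, HasDerivWithinAt g (g' t) (Set.Icc 0 1) t)
    (hg' : ContinuousOn g' (Set.Icc 0 1)) {a b : ℝ}
    (ha : a ∈ Set.Icc (0:ℝ) 1) (hb : b ∈ Set.Icc (0:ℝ) 1) :
    ∫ t in a..b, g' t = g b - g a := by
  have hgc : ContinuousOn g (Set.Icc 0 1) := fun t ht => (hg t ht).continuousWithinAt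
  have hsub : Set.uIcc a b ⊆ Set.Icc 0 1 := Set.uIcc_subset_Icc ha hb
  refine intervalIntegral.integral_eq_sub_of_hasDeriv_right (hgc.mono hsub) ?_
    ((hg'.mono hsub).intervalIntegrable)
  intro t ht
  have h0 : (0:ℝ) ≤ a ⊓ b := le_min ha.1 hb.1
  have h1 : a ⊔ b ≤ 1 := max_le ha.2 hb.2
  have ht01 : t ∈ Set.Ioo (0:ℝ) 1 := ⟨lt_of_le_of_lt h0 ht.1, lt_of_lt_of_le ht.2 h1⟩
  have : HasDerivAt g (g' t) t :=
    (hg t ⟨ht01.1.le, ht01.2.le⟩).hasDerivAt (Icc_mem_nhds ht01.1 ht01.2)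
  exact this.hasDerivWithinAt

/-- two continuous functions on Icc 0 1 agreeing on Ioo 0 1 agree on Icc. -/
lemma eq_on_Icc_of_eq_on_Ioo {g h : ℝ → ℝ} (hg : ContinuousOn g (Set.Icc 0 1))
    (hh : ContinuousOn h (Set.Icc 0 1)) (heq : ∀ t ∈ Set.Ioo (0:ℝ) 1, g t = h t) :
    ∀ t ∈ Set.Icc (0:ℝ) 1, g t = h t := by
  intro t ht
  have hcl : t ∈ closure (Set.Ioo (0:ℝ) 1) := by
    rw [closure_Ioo (by norm_num : (0:ℝ) ≠ 1)]; exact ht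
  have hne : (nhdsWithin t (Set.Ioo (0:ℝ) 1)).NeBot := mem_closure_iff_nhdsWithin_neBot.1 hcl
  have h1 : Filter.Tendsto g (nhdsWithin t (Set.Ioo (0:ℝ) 1)) (nhds (g t)) :=
    (hg t ht).mono Set.Ioo_subset_Icc_self
  have h2 : Filter.Tendsto h (nhdsWithin t (Set.Ioo (0:ℝ) 1)) (nhds (h t)) :=
    (hh t ht).mono Set.Ioo_subset_Icc_self
  have h1' : Filter.Tendsto h (nhdsWithin t (Set.Ioo (0:ℝ) 1)) (nhds (g t)) := by
    refine h1.congr' ?_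
    filter_upwards [self_mem_nhdsWithin] with s hs using heq s hs
  exact tendsto_nhds_unique h1' h2

lemma stiff_apply (n : ℕ) (hn : 2 ≤ n) (x : ℕ → ℝ) (w : Fin (n-1) → ℝ) (j : Fin (n-1)) :
    (stiff n x).mulVec w j =
      (1/(x ((j:ℕ)+1) - x (j:ℕ)) + 1/(x ((j:ℕ)+2) - x ((j:ℕ)+1))) * extendVec n w ((j:ℕ)+1)
      - (1/(x ((j:ℕ)+2) - x ((j:ℕ)+1))) * extendVec n w ((j:ℕ)+2)
      - (1/(x ((j:ℕ)+1) - x (j:ℕ))) * extendVec n w (j:ℕ) := by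
  have hjlt : (j:ℕ) < n - 1 := j.2
  have key : ∀ k : Fin (n-1), stiff n x j k * w k =
      (if k = j then (1/(x ((j:ℕ)+1) - x ((j:ℕ))) + 1/(x ((j:ℕ)+2) - x ((j:ℕ)+1))) * w k else 0)
    + (if (k:ℕ) = (j:ℕ)+1 then -(1/(x ((j:ℕ)+2) - x ((j:ℕ)+1))) * w k else 0)
    + (if (k:ℕ)+1 = (j:ℕ) then -(1/(x ((j:ℕ)+1) - x ((j:ℕ)))) * w k else 0) := by
    intro k
    simp only [stiff]
    by_cases h1 : (j:ℕ) = (k:ℕ)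
    · have hkj : k = j := Fin.ext h1.symm
      subst hkj
      rw [if_pos rfl, if_pos rfl, if_neg (by omega), if_neg (by omega)]; ring
    · have hkj : ¬ k = j := fun h => h1 (by rw [h])
      rw [if_neg h1, if_neg hkj]
      by_cases h2 : (k:ℕ) = (j:ℕ)+1
      · rw [if_pos h2, if_pos h2, if_neg (by omega)]; ring
      · rw [if_neg h2, if_neg h2]
        by_cases h3 : (j:ℕ) = (k:ℕ)+1
        · rw [if_pos h3, if_pos (by omega)]; ring
        · rw [if_neg h3, if_neg (by omega)]; ring
  rw [Matrix.mulVec, dotProduct]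
  simp_rw [key, Finset.sum_add_distrib]
  have e1 : ∑ k : Fin (n-1), (if k = j then
      (1/(x ((j:ℕ)+1) - x ((j:ℕ))) + 1/(x ((j:ℕ)+2) - x ((j:ℕ)+1))) * w k else 0)
      = (1/(x ((j:ℕ)+1) - x ((j:ℕ))) + 1/(x ((j:ℕ)+2) - x ((j:ℕ)+1))) * extendVec n w ((j:ℕ)+1) := by
    rw [Finset.sum_ite_eq' Finset.univ j, if_pos (Finset.mem_univ _),
      extendVec_eq n w ((j:ℕ)+1) (by omega) (by omega)]
    congr 2
  have e2 : ∑ k : Fin (n-1), (if (k:ℕ) = (j:ℕ)+1 then -(1/(x ((j:ℕ)+2) - x ((j:ℕ)+1))) * w k else 0)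
      = (1/(x ((j:ℕ)+2) - x ((j:ℕ)+1))) * (- extendVec n w ((j:ℕ)+2)) := by
    by_cases hlt : (j:ℕ)+1 < n-1
    · have hco : ∀ k : Fin (n-1), ((k:ℕ) = (j:ℕ)+1) ↔ k = ⟨(j:ℕ)+1, hlt⟩ := by
        intro k; rw [Fin.ext_iff]
      simp_rw [hco]
      rw [Finset.sum_ite_eq' Finset.univ (⟨(j:ℕ)+1, hlt⟩ : Fin (n-1)), if_pos (Finset.mem_univ _),
        extendVec_eq n w ((j:ℕ)+2) (by omega) (by omega)]
      have : (⟨(j:ℕ)+2-1, by simp; omega⟩ : Fin (n-1)) = ⟨(j:ℕ)+1, hlt⟩ := Fin.ext (by simp)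
      rw [this]; ring
    · rw [Finset.sum_eq_zero (fun k _ => if_neg (by have := k.2; omega)),
        extendVec_top n w ((j:ℕ)+2) (by omega)]
      ring
  have e3 : ∑ k : Fin (n-1), (if (k:ℕ)+1 = (j:ℕ) then -(1/(x ((j:ℕ)+1) - x ((j:ℕ)))) * w k else 0)
      = (1/(x ((j:ℕ)+1) - x ((j:ℕ)))) * (- extendVec n w ((j:ℕ))) := by
    by_cases hj1 : 1 ≤ (j:ℕ)
    · have hlt : (j:ℕ)-1 < n-1 := by omega
      have hco : ∀ k : Fin (n-1), ((k:ℕ)+1 = (j:ℕ)) ↔ k = ⟨(j:ℕ)-1, hlt⟩ := by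
        intro k; rw [Fin.ext_iff]; simp; omega
      simp_rw [hco]
      rw [Finset.sum_ite_eq' Finset.univ (⟨(j:ℕ)-1, hlt⟩ : Fin (n-1)), if_pos (Finset.mem_univ _),
        extendVec_eq n w ((j:ℕ)) hj1 hlt]
      ring
    · rw [Finset.sum_eq_zero (fun k _ => if_neg (by omega))]
      have : (j:ℕ) = 0 := by omega
      rw [this, extendVec_zero]; ring
  rw [e1, e2, e3]; ring

lemma minpt {g : ℝ → ℝ} {a b : ℝ} (hab : a < b) (hc : ContinuousOn g (Set.Icc a b)) :
    ∃ c ∈ Set.Icc a b, (b - a) * g c ^ 2 ≤ ∫ t in a..b, g t ^ 2 := by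
  obtain ⟨c, hc1, hc2⟩ := IsCompact.exists_isMinOn isCompact_Icc
    (Set.nonempty_Icc.2 hab.le) ((hc.pow 2) : ContinuousOn (fun t => g t ^ 2) _)
  refine ⟨c, hc1, ?_⟩
  calc (b - a) * g c ^ 2 = ∫ _ in a..b, g c ^ 2 := by
        rw [intervalIntegral.integral_const, smul_eq_mul]
    _ ≤ ∫ t in a..b, g t ^ 2 := by
        apply intervalIntegral.integral_mono_on hab.le intervalIntegrable_const
          ((hc.pow 2).intervalIntegrable_of_Icc hab.le)
        intro t ht; exact hc2 ht

/-- Landau-type bounds: `‖f'‖∞` and `‖f‖∞` are controlled by `‖f‖_{L²}` and `‖f''‖∞`. -/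
lemma landau {f f' f'' : ℝ → ℝ}
    (hf : ∀ t ∈ Set.Icc (0:ℝ) 1, HasDerivWithinAt f (f' t) (Set.Icc 0 1) t)
    (hf' : ∀ t ∈ Set.Icc (0:ℝ) 1, HasDerivWithinAt f' (f'' t) (Set.Icc 0 1) t)
    (hf'' : ContinuousOn f'' (Set.Icc (0:ℝ) 1))
    {M N : ℝ} (hM : ∀ t ∈ Set.Icc (0:ℝ) 1, |f'' t| ≤ M)
    (hN : N = Real.sqrt (∫ t in (0:ℝ)..1, f t ^ 2)) :
    (∀ t ∈ Set.Icc (0:ℝ) 1, |f' t| ≤ 6 * Real.sqrt 3 * N + M) ∧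
    (∀ t ∈ Set.Icc (0:ℝ) 1, |f t| ≤ 7 * Real.sqrt 3 * N + M) := by
  have hfc : ContinuousOn f (Set.Icc 0 1) := fun t ht => (hf t ht).continuousWithinAt
  have hf'c : ContinuousOn f' (Set.Icc 0 1) := fun t ht => (hf' t ht).continuousWithinAt
  set I : ℝ := ∫ t in (0:ℝ)..1, f t ^ 2 with hI
  have hInn : 0 ≤ I := intervalIntegral.integral_nonneg (by norm_num)
    (fun t _ => sq_nonneg _)
  have hsq : ∀ t ∈ Set.Icc (0:ℝ) 1, f t ^ 2 ≤ 3 * I → |f t| ≤ Real.sqrt 3 * N := by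
    intro t _ h
    calc |f t| = Real.sqrt (f t ^ 2) := (Real.sqrt_sq_eq_abs _).symm
      _ ≤ Real.sqrt (3 * I) := Real.sqrt_le_sqrt h
      _ = Real.sqrt 3 * N := by rw [Real.sqrt_mul (by norm_num), hN]
  have hint : IntervalIntegrable (fun t => f t ^ 2) volume 0 1 :=
    (hfc.pow 2).intervalIntegrable_of_Icc (by norm_num)
  -- point in [0, 1/3] with small |f|
  have hc₁ : ∃ c ∈ Set.Icc (0:ℝ) (1/3), |f c| ≤ Real.sqrt 3 * N := by
    obtain ⟨c, hc1, hc2⟩ := minpt (by norm_num : (0:ℝ) < 1/3)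
      (hfc.mono (Set.Icc_subset_Icc le_rfl (by norm_num)))
    have hcin : c ∈ Set.Icc (0:ℝ) 1 := Set.Icc_subset_Icc le_rfl (by norm_num) hc1
    refine ⟨c, hc1, hsq c hcin ?_⟩
    have hle : (∫ t in (0:ℝ)..(1/3), f t ^ 2) ≤ I := by
      apply intervalIntegral.integral_mono_interval le_rfl (by norm_num) (by norm_num)
        (Filter.Eventually.of_forall (fun t => sq_nonneg _)) hint
    nlinarith
  have hc₂ : ∃ c ∈ Set.Icc (2/3:ℝ) 1, |f c| ≤ Real.sqrt 3 * N := by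
    obtain ⟨c, hc1, hc2⟩ := minpt (by norm_num : (2/3:ℝ) < 1)
      (hfc.mono (Set.Icc_subset_Icc (by norm_num) le_rfl))
    have hcin : c ∈ Set.Icc (0:ℝ) 1 := Set.Icc_subset_Icc (by norm_num) le_rfl hc1
    refine ⟨c, hc1, hsq c hcin ?_⟩
    have hle : (∫ t in (2/3:ℝ)..1, f t ^ 2) ≤ I := by
      apply intervalIntegral.integral_mono_interval (by norm_num) (by norm_num) le_rfl
        (Filter.Eventually.of_forall (fun t => sq_nonneg _)) hint
    nlinarith
  obtain ⟨c₁, hc₁i, hc₁b⟩ := hc₁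
  obtain ⟨c₂, hc₂i, hc₂b⟩ := hc₂
  have hc₁01 : c₁ ∈ Set.Icc (0:ℝ) 1 := Set.Icc_subset_Icc le_rfl (by norm_num) hc₁i
  have hc₂01 : c₂ ∈ Set.Icc (0:ℝ) 1 := Set.Icc_subset_Icc (by norm_num) le_rfl hc₂i
  have hclt : c₁ < c₂ := lt_of_le_of_lt hc₁i.2 (lt_of_lt_of_le (by norm_num) hc₂i.1)
  have hM0 : 0 ≤ M := le_trans (abs_nonneg _) (hM 0 (by norm_num))
  have hN0 : 0 ≤ N := hN ▸ Real.sqrt_nonneg _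
  -- MVT
  obtain ⟨ξ, hξi, hξ⟩ := exists_hasDerivAt_eq_slope f f' hclt
    (hfc.mono (Set.Icc_subset_Icc hc₁01.1 hc₂01.2))
    (fun t ht => (hf t ⟨le_of_lt (lt_of_le_of_lt hc₁01.1 ht.1),
      le_of_lt (lt_of_lt_of_le ht.2 hc₂01.2)⟩).hasDerivAt
      (Icc_mem_nhds (lt_of_le_of_lt hc₁01.1 ht.1) (lt_of_lt_of_le ht.2 hc₂01.2)))
  have hξ01 : ξ ∈ Set.Icc (0:ℝ) 1 :=
    ⟨le_trans hc₁01.1 hξi.1.le, le_trans hξi.2.le hc₂01.2⟩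
  have hslope : |f' ξ| ≤ 6 * Real.sqrt 3 * N := by
    rw [hξ, abs_div, abs_of_pos (by linarith : (0:ℝ) < c₂ - c₁)]
    have h1 : |f c₂ - f c₁| ≤ 2 * (Real.sqrt 3 * N) := by
      calc |f c₂ - f c₁| ≤ |f c₂| + |f c₁| := abs_sub _ _
        _ ≤ 2 * (Real.sqrt 3 * N) := by linarith
    have h2 : (1:ℝ)/3 ≤ c₂ - c₁ := by
      have := hc₁i.2; have := hc₂i.1; linarith
    calc |f c₂ - f c₁| / (c₂ - c₁) ≤ (2 * (Real.sqrt 3 * N)) / (1/3) := by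
          apply div_le_div₀ (by positivity) h1 (by norm_num) h2
      _ = 6 * Real.sqrt 3 * N := by ring
  have key' : ∀ t ∈ Set.Icc (0:ℝ) 1, |f' t| ≤ 6 * Real.sqrt 3 * N + M := by
    intro t ht
    have hftc : ∫ s in ξ..t, f'' s = f' t - f' ξ := ftc01 hf' hf'' hξ01 ht
    have hbd : |f' t - f' ξ| ≤ M := by
      rw [← hftc]
      have := intervalIntegral.norm_integral_le_of_norm_le_const
        (C := M) (f := f'') (a := ξ) (b := t) ?_
      · rw [Real.norm_eq_abs] at this
        refine le_trans this ?_
        have : |t - ξ| ≤ 1 := by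
          rw [abs_sub_le_iff]; constructor <;> [linarith [ht.1, ht.2, hξ01.1, hξ01.2];
            linarith [ht.1, ht.2, hξ01.1, hξ01.2]]
        nlinarith
      · intro s hs
        have hs' : s ∈ Set.Icc (0:ℝ) 1 := Set.uIcc_subset_Icc hξ01 ht (Set.uIoc_subset_uIcc hs)
        exact (hM s hs')
    calc |f' t| ≤ |f' ξ| + |f' t - f' ξ| := by
          have := abs_add_le (f' ξ) (f' t - f' ξ); simpa using this
      _ ≤ 6 * Real.sqrt 3 * N + M := add_le_add hslope hbd
  refine ⟨key', ?_⟩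
  intro t ht
  have hftc : ∫ s in c₁..t, f' s = f t - f c₁ := ftc01 hf hf'c hc₁01 ht
  have hbd : |f t - f c₁| ≤ 6 * Real.sqrt 3 * N + M := by
    rw [← hftc]
    have h := intervalIntegral.norm_integral_le_of_norm_le_const
      (C := 6 * Real.sqrt 3 * N + M) (f := f') (a := c₁) (b := t) ?_
    · rw [Real.norm_eq_abs] at h
      refine le_trans h ?_
      have habs : |t - c₁| ≤ 1 := by
        rw [abs_sub_le_iff]; constructor <;>
          [linarith [ht.1, ht.2, hc₁01.1, hc₁01.2]; linarith [ht.1, ht.2, hc₁01.1, hc₁01.2]]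
      have hco : 0 ≤ 6 * Real.sqrt 3 * N + M := by
        have := Real.sqrt_nonneg 3; nlinarith
      nlinarith [mul_le_mul_of_nonneg_left habs hco]
    · intro s hs
      exact key' s (Set.uIcc_subset_Icc hc₁01 ht (Set.uIoc_subset_uIcc hs))
  calc |f t| ≤ |f c₁| + |f t - f c₁| := by
        have := abs_add_le (f c₁) (f t - f c₁); simpa using this
    _ ≤ Real.sqrt 3 * N + (6 * Real.sqrt 3 * N + M) := add_le_add hc₁b hbd
    _ = 7 * Real.sqrt 3 * N + M := by ring

lemma weak_left {u u' u'' f : ℝ → ℝ}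
    (hu : ∀ t ∈ Set.Icc (0:ℝ) 1, HasDerivWithinAt u (u' t) (Set.Icc 0 1) t)
    (hu' : ∀ t ∈ Set.Icc (0:ℝ) 1, HasDerivWithinAt u' (u'' t) (Set.Icc 0 1) t)
    (hu''c : ContinuousOn u'' (Set.Icc (0:ℝ) 1))
    (hueq : ∀ t ∈ Set.Icc (0:ℝ) 1, u'' t = -f t)
    {a b : ℝ} (ha : a ∈ Set.Icc (0:ℝ) 1) (hb : b ∈ Set.Icc (0:ℝ) 1) (hab : a < b) :
    ∫ t in a..b, f t * ((t - a)/(b - a)) = (u b - u a)/(b - a) - u' b := by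
  have hne : b - a ≠ 0 := by linarith
  have hd : ∀ t ∈ Set.Icc (0:ℝ) 1, HasDerivWithinAt (fun s => (u' s * (s - a) - u s)/(b-a))
      (u'' t * ((t - a)/(b-a))) (Set.Icc 0 1) t := by
    intro t ht
    have hid : HasDerivWithinAt (fun s : ℝ => s - a) 1 (Set.Icc 0 1) t :=
      (hasDerivWithinAt_id t _).sub_const a
    have h2 := (((hu' t ht).mul hid).sub (hu t ht)).div_const (b - a)
    rw [show u'' t * ((t - a)/(b-a)) = (u'' t * (t - a) + u' t * 1 - u' t) / (b - a) by ring]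
    exact h2
  have hc : ContinuousOn (fun t => u'' t * ((t - a)/(b-a))) (Set.Icc (0:ℝ) 1) :=
    hu''c.mul (Continuous.continuousOn (by continuity))
  have h1 : ∫ t in a..b, u'' t * ((t - a)/(b-a))
      = (u' b * (b - a) - u b)/(b-a) - (u' a * (a - a) - u a)/(b-a) := ftc01 hd hc ha hb
  have h2 : ∫ t in a..b, f t * ((t - a)/(b - a))
      = - ∫ t in a..b, u'' t * ((t - a)/(b-a)) := by
    rw [← intervalIntegral.integral_neg]
    apply intervalIntegral.integral_congr
    intro t ht
    have ht01 : t ∈ Set.Icc (0:ℝ) 1 := Set.uIcc_subset_Icc ha hb ht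
    simp only [hueq t ht01]; ring
  rw [h2, h1]
  field_simp
  ring

lemma weak_right {u u' u'' f : ℝ → ℝ}
    (hu : ∀ t ∈ Set.Icc (0:ℝ) 1, HasDerivWithinAt u (u' t) (Set.Icc 0 1) t)
    (hu' : ∀ t ∈ Set.Icc (0:ℝ) 1, HasDerivWithinAt u' (u'' t) (Set.Icc 0 1) t)
    (hu''c : ContinuousOn u'' (Set.Icc (0:ℝ) 1))
    (hueq : ∀ t ∈ Set.Icc (0:ℝ) 1, u'' t = -f t)
    {a b : ℝ} (ha : a ∈ Set.Icc (0:ℝ) 1) (hb : b ∈ Set.Icc (0:ℝ) 1) (hab : a < b) :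
    ∫ t in a..b, f t * ((b - t)/(b - a)) = u' a - (u b - u a)/(b - a) := by
  have hne : b - a ≠ 0 := by linarith
  have hd : ∀ t ∈ Set.Icc (0:ℝ) 1, HasDerivWithinAt (fun s => (u' s * (b - s) + u s)/(b-a))
      (u'' t * ((b - t)/(b-a))) (Set.Icc 0 1) t := by
    intro t ht
    have hid : HasDerivWithinAt (fun s : ℝ => b - s) (-1) (Set.Icc 0 1) t :=
      (hasDerivWithinAt_id t _).const_sub b
    have h2 := (((hu' t ht).mul hid).add (hu t ht)).div_const (b - a)
    rw [show u'' t * ((b - t)/(b-a)) = (u'' t * (b - t) + u' t * -1 + u' t) / (b - a) by ring]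
    exact h2
  have hc : ContinuousOn (fun t => u'' t * ((b - t)/(b-a))) (Set.Icc (0:ℝ) 1) :=
    hu''c.mul (Continuous.continuousOn (by continuity))
  have h1 : ∫ t in a..b, u'' t * ((b - t)/(b-a))
      = (u' b * (b - b) + u b)/(b-a) - (u' a * (b - a) + u a)/(b-a) := ftc01 hd hc ha hb
  have h2 : ∫ t in a..b, f t * ((b - t)/(b - a))
      = - ∫ t in a..b, u'' t * ((b - t)/(b-a)) := by
    rw [← intervalIntegral.integral_neg]
    apply intervalIntegral.integral_congr
    intro t ht
    have ht01 : t ∈ Set.Icc (0:ℝ) 1 := Set.uIcc_subset_Icc ha hb ht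
    simp only [hueq t ht01]; ring
  rw [h2, h1]
  field_simp
  ring

lemma quad_left {f f' : ℝ → ℝ}
    (hf : ∀ t ∈ Set.Icc (0:ℝ) 1, HasDerivWithinAt f (f' t) (Set.Icc 0 1) t)
    (hf'c : ContinuousOn f' (Set.Icc (0:ℝ) 1))
    {K : ℝ} (hK : ∀ t ∈ Set.Icc (0:ℝ) 1, |f' t| ≤ K)
    {a b : ℝ} (ha : a ∈ Set.Icc (0:ℝ) 1) (hb : b ∈ Set.Icc (0:ℝ) 1) (hab : a < b) :
    |(∫ t in a..b, f t * ((t - a)/(b - a))) - (b - a)/2 * f b| ≤ K * (b - a)^2 := by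
  have hfc : ContinuousOn f (Set.Icc 0 1) := fun t ht => (hf t ht).continuousWithinAt
  have hsub : Set.uIcc a b ⊆ Set.Icc 0 1 := Set.uIcc_subset_Icc ha hb
  have hK0 : 0 ≤ K := le_trans (abs_nonneg _) (hK a ha)
  have hne : b - a ≠ 0 := by linarith
  have hφc : Continuous (fun t : ℝ => (t - a)/(b - a)) := by continuity
  have hφint : ∫ t in a..b, (t - a)/(b - a) = (b - a)/2 := by
    have h1 : ∫ t in a..b, (t - a) = (b - a)^2/2 := by
      rw [intervalIntegral.integral_sub intervalIntegral.intervalIntegrable_id intervalIntegrable_const,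
        integral_id, intervalIntegral.integral_const, smul_eq_mul]
      ring
    rw [intervalIntegral.integral_div, h1]
    field_simp
  have hint1 : IntervalIntegrable (fun t => f t * ((t - a)/(b - a))) volume a b :=
    ((hfc.mono hsub).mul hφc.continuousOn).intervalIntegrable
  have hint2 : IntervalIntegrable (fun t : ℝ => f b * ((t - a)/(b - a))) volume a b :=
    (continuousOn_const.mul hφc.continuousOn).intervalIntegrable
  have hsplit : (∫ t in a..b, f t * ((t - a)/(b - a))) - (b - a)/2 * f b
      = ∫ t in a..b, (f t - f b) * ((t - a)/(b - a)) := by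
    have : ∀ t ∈ Set.uIcc a b, (f t - f b) * ((t - a)/(b - a))
        = f t * ((t - a)/(b - a)) - f b * ((t - a)/(b - a)) := fun t _ => by ring
    rw [intervalIntegral.integral_congr this,
      intervalIntegral.integral_sub hint1 hint2,
      intervalIntegral.integral_const_mul, hφint]
    ring
  rw [hsplit]
  have hbd : ∀ t ∈ Set.uIoc a b, ‖(f t - f b) * ((t - a)/(b - a))‖ ≤ K * (b - a) := by
    intro t ht
    rw [Set.uIoc_of_le hab.le] at ht
    have ht01 : t ∈ Set.Icc (0:ℝ) 1 :=
      Set.uIcc_subset_Icc ha hb (Set.uIoc_subset_uIcc (by rw [Set.uIoc_of_le hab.le]; exact ht))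
    have hdiff : |f t - f b| ≤ K * (b - a) := by
      have hftc : ∫ s in b..t, f' s = f t - f b := ftc01 hf hf'c hb ht01
      rw [← hftc]
      have h := intervalIntegral.norm_integral_le_of_norm_le_const (C := K) (f := f')
        (a := b) (b := t) (fun s hs => hK s (Set.uIcc_subset_Icc hb ht01 (Set.uIoc_subset_uIcc hs)))
      rw [Real.norm_eq_abs] at h
      refine le_trans h ?_
      have : |t - b| ≤ b - a := by
        rw [abs_sub_le_iff]; constructor <;> [linarith [ht.1, ht.2]; linarith [ht.1, ht.2]]
      nlinarith
    have hφbd : |(t - a)/(b - a)| ≤ 1 := by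
      rw [abs_div, abs_of_pos (by linarith : (0:ℝ) < b - a),
        abs_of_pos (by linarith [ht.1] : (0:ℝ) < t - a)]
      rw [div_le_one (by linarith)]
      linarith [ht.2]
    rw [Real.norm_eq_abs, abs_mul]
    calc |f t - f b| * |(t - a)/(b - a)| ≤ (K * (b - a)) * 1 :=
          mul_le_mul hdiff hφbd (abs_nonneg _) (by nlinarith)
      _ = K * (b - a) := by ring
  have h := intervalIntegral.norm_integral_le_of_norm_le_const hbd
  rw [Real.norm_eq_abs] at h
  refine le_trans h ?_
  rw [abs_of_pos (by linarith : (0:ℝ) < b - a)]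
  nlinarith

lemma quad_right {f f' : ℝ → ℝ}
    (hf : ∀ t ∈ Set.Icc (0:ℝ) 1, HasDerivWithinAt f (f' t) (Set.Icc 0 1) t)
    (hf'c : ContinuousOn f' (Set.Icc (0:ℝ) 1))
    {K : ℝ} (hK : ∀ t ∈ Set.Icc (0:ℝ) 1, |f' t| ≤ K)
    {a b : ℝ} (ha : a ∈ Set.Icc (0:ℝ) 1) (hb : b ∈ Set.Icc (0:ℝ) 1) (hab : a < b) :
    |(∫ t in a..b, f t * ((b - t)/(b - a))) - (b - a)/2 * f a| ≤ K * (b - a)^2 := by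
  have hfc : ContinuousOn f (Set.Icc 0 1) := fun t ht => (hf t ht).continuousWithinAt
  have hsub : Set.uIcc a b ⊆ Set.Icc 0 1 := Set.uIcc_subset_Icc ha hb
  have hK0 : 0 ≤ K := le_trans (abs_nonneg _) (hK a ha)
  have hne : b - a ≠ 0 := by linarith
  have hφc : Continuous (fun t : ℝ => (b - t)/(b - a)) := by continuity
  have hφint : ∫ t in a..b, (b - t)/(b - a) = (b - a)/2 := by
    have h1 : ∫ t in a..b, (b - t) = (b - a)^2/2 := by
      rw [intervalIntegral.integral_sub intervalIntegrable_const intervalIntegral.intervalIntegrable_id,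
        integral_id, intervalIntegral.integral_const, smul_eq_mul]
      ring
    rw [intervalIntegral.integral_div, h1]
    field_simp
  have hint1 : IntervalIntegrable (fun t => f t * ((b - t)/(b - a))) volume a b :=
    ((hfc.mono hsub).mul hφc.continuousOn).intervalIntegrable
  have hint2 : IntervalIntegrable (fun t : ℝ => f a * ((b - t)/(b - a))) volume a b :=
    (continuousOn_const.mul hφc.continuousOn).intervalIntegrable
  have hsplit : (∫ t in a..b, f t * ((b - t)/(b - a))) - (b - a)/2 * f a
      = ∫ t in a..b, (f t - f a) * ((b - t)/(b - a)) := by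
    have : ∀ t ∈ Set.uIcc a b, (f t - f a) * ((b - t)/(b - a))
        = f t * ((b - t)/(b - a)) - f a * ((b - t)/(b - a)) := fun t _ => by ring
    rw [intervalIntegral.integral_congr this,
      intervalIntegral.integral_sub hint1 hint2,
      intervalIntegral.integral_const_mul, hφint]
    ring
  rw [hsplit]
  have hbd : ∀ t ∈ Set.uIoc a b, ‖(f t - f a) * ((b - t)/(b - a))‖ ≤ K * (b - a) := by
    intro t ht
    rw [Set.uIoc_of_le hab.le] at ht
    have ht01 : t ∈ Set.Icc (0:ℝ) 1 :=
      Set.uIcc_subset_Icc ha hb (Set.uIoc_subset_uIcc (by rw [Set.uIoc_of_le hab.le]; exact ht))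
    have hdiff : |f t - f a| ≤ K * (b - a) := by
      have hftc : ∫ s in a..t, f' s = f t - f a := ftc01 hf hf'c ha ht01
      rw [← hftc]
      have h := intervalIntegral.norm_integral_le_of_norm_le_const (C := K) (f := f')
        (a := a) (b := t) (fun s hs => hK s (Set.uIcc_subset_Icc ha ht01 (Set.uIoc_subset_uIcc hs)))
      rw [Real.norm_eq_abs] at h
      refine le_trans h ?_
      have : |t - a| ≤ b - a := by
        rw [abs_sub_le_iff]; constructor <;> [linarith [ht.1, ht.2]; linarith [ht.1, ht.2]]
      nlinarith
    have hφbd : |(b - t)/(b - a)| ≤ 1 := by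
      rw [abs_div, abs_of_pos (by linarith : (0:ℝ) < b - a),
        abs_of_nonneg (by linarith [ht.2] : (0:ℝ) ≤ b - t)]
      rw [div_le_one (by linarith)]
      linarith [ht.1]
    rw [Real.norm_eq_abs, abs_mul]
    calc |f t - f a| * |(b - t)/(b - a)| ≤ (K * (b - a)) * 1 :=
          mul_le_mul hdiff hφbd (abs_nonneg _) (by nlinarith)
      _ = K * (b - a) := by ring
  have h := intervalIntegral.norm_integral_le_of_norm_le_const hbd
  rw [Real.norm_eq_abs] at h
  refine le_trans h ?_
  rw [abs_of_pos (by linarith : (0:ℝ) < b - a)]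
  nlinarith

set_option maxHeartbeats 1000000 in
/- On each subinterval `[x_{i-1}, x_i]` the piecewise linear interpolant `v_h` of the
nodal values `w` has constant derivative `(w_i - w_{i-1})/h_i`, so the squared energy
norm `∫₀¹ (u' - v_h')²` is the sum of the corresponding subinterval integrals. -/
theorem stmt7 :
    ∃ C > (0:ℝ),
      ∀ (n : ℕ) (hn : 2 ≤ n),
      ∀ (x : ℕ → ℝ), x 0 = 0 → x n = 1 → (∀ i, i < n → x i < x (i + 1)) →
      ∀ f f' f'' : ℝ → ℝ,
        (∀ t ∈ Set.Icc (0:ℝ) 1, HasDerivWithinAt f (f' t) (Set.Icc 0 1) t) →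
        (∀ t ∈ Set.Icc (0:ℝ) 1, HasDerivWithinAt f' (f'' t) (Set.Icc 0 1) t) →
        ContinuousOn f'' (Set.Icc (0:ℝ) 1) →
      ∀ u u' u'' : ℝ → ℝ,
        (∀ t ∈ Set.Icc (0:ℝ) 1, HasDerivWithinAt u (u' t) (Set.Icc 0 1) t) →
        (∀ t ∈ Set.Icc (0:ℝ) 1, HasDerivWithinAt u' (u'' t) (Set.Icc 0 1) t) →
        ContinuousOn u'' (Set.Icc (0:ℝ) 1) →
        (∀ t ∈ Set.Ioo (0:ℝ) 1, -u'' t = f t) →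
        u 0 = 0 → u 1 = 0 →
      ∀ w : Fin (n - 1) → ℝ,
        (stiff n x).mulVec w =
          (weightMat n x).mulVec (fun j : Fin (n - 1) => f (x ((j : ℕ) + 1))) →
      Real.sqrt (∑ i ∈ Finset.Icc 1 n,
          ∫ t in x (i - 1)..x i,
            (u' t - (extendVec n w i - extendVec n w (i - 1)) / (x i - x (i - 1))) ^ 2)
        ≤ C * ((Finset.Icc 1 n).sup'
              (Finset.nonempty_Icc.mpr (by omega)) fun j => x j - x (j - 1)) *
            ((⨆ t : Set.Icc (0:ℝ) 1, |f'' t|) +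
              Real.sqrt (∫ t in (0:ℝ)..1, f t ^ 2)) := by
  refine ⟨100, by norm_num, ?_⟩
  intro n hn x hx0 hxn hinc f f' f'' hf hf' hf''c u u' u'' hu hu' hu''c hode hu0 hu1 w hw
  -- mesh facts
  have hmono : ∀ i j : ℕ, i ≤ j → j ≤ n → x i ≤ x j := by
    intro i j hij hjn
    induction j with
    | zero => rw [Nat.le_zero] at hij; rw [hij]
    | succ k ih =>
      rcases Nat.eq_or_lt_of_le hij with h | h
      · rw [h]
      · exact le_trans (ih (by omega) (by omega)) (le_of_lt (hinc k (by omega)))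
  have hx01 : ∀ i, i ≤ n → x i ∈ Set.Icc (0:ℝ) 1 := fun i hi =>
    ⟨by rw [← hx0]; exact hmono 0 i (by omega) hi,
     by rw [← hxn]; exact hmono i n hi le_rfl⟩
  have hpos : ∀ i, 1 ≤ i → i ≤ n → 0 < x i - x (i-1) := by
    intro i h1 h2
    have h := hinc (i-1) (by omega)
    have e : i - 1 + 1 = i := by omega
    rw [e] at h; linarith
  set H := (Finset.Icc 1 n).sup' (Finset.nonempty_Icc.mpr (by omega)) (fun j => x j - x (j-1))
    with hHdef
  have hH1 : ∀ i, 1 ≤ i → i ≤ n → x i - x (i-1) ≤ H := by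
    intro i h1 h2
    rw [hHdef]
    exact Finset.le_sup' (fun j => x j - x (j-1)) (Finset.mem_Icc.mpr ⟨h1, h2⟩)
  have hHpos : 0 < H := lt_of_lt_of_le (hpos 1 le_rfl (by omega)) (hH1 1 le_rfl (by omega))
  -- sup norm of f'' and L² norm of f
  set M := ⨆ t : Set.Icc (0:ℝ) 1, |f'' t| with hMdef
  have hMbd : ∀ t ∈ Set.Icc (0:ℝ) 1, |f'' t| ≤ M := by
    obtain ⟨Cb, hCb⟩ := isCompact_Icc.exists_bound_of_continuousOn hf''c
    intro t ht
    exact le_ciSup ⟨Cb, by rintro y ⟨s, rfl⟩; simpa using hCb s s.2⟩ (⟨t, ht⟩ : Set.Icc (0:ℝ) 1)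
  have hM0 : 0 ≤ M := le_trans (abs_nonneg _) (hMbd 0 (by norm_num))
  set N := Real.sqrt (∫ t in (0:ℝ)..1, f t ^ 2) with hNdef
  have hN0 : 0 ≤ N := Real.sqrt_nonneg _
  obtain ⟨hKf', hKf⟩ := landau hf hf' hf''c hMbd hNdef
  set K := 6 * Real.sqrt 3 * N + M with hKdef
  set K₀ := 7 * Real.sqrt 3 * N + M with hK₀def
  have hsq3 : (0:ℝ) ≤ Real.sqrt 3 := Real.sqrt_nonneg 3
  have hK0 : 0 ≤ K := by positivity
  have hK₀0 : 0 ≤ K₀ := by positivity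
  -- continuity
  have hfc : ContinuousOn f (Set.Icc 0 1) := fun t ht => (hf t ht).continuousWithinAt
  have hf'c : ContinuousOn f' (Set.Icc 0 1) := fun t ht => (hf' t ht).continuousWithinAt
  have huc : ContinuousOn u (Set.Icc 0 1) := fun t ht => (hu t ht).continuousWithinAt
  have hu'c : ContinuousOn u' (Set.Icc 0 1) := fun t ht => (hu' t ht).continuousWithinAt
  have hueq : ∀ t ∈ Set.Icc (0:ℝ) 1, u'' t = -f t :=
    eq_on_Icc_of_eq_on_Ioo hu''c hfc.neg (fun t ht => by have := hode t ht; linarith)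
  -- abbreviations
  set Wv := extendVec n w with hWv
  set du : ℕ → ℝ := fun p => (u (x p) - u (x (p-1))) / (x p - x (p-1)) with hdu
  set dw : ℕ → ℝ := fun p => (Wv p - Wv (p-1)) / (x p - x (p-1)) with hdw
  set dE : ℕ → ℝ := fun p => u (x p) - Wv p with hdE
  set de : ℕ → ℝ := fun p => du p - dw p with hde
  set A := ∑ i ∈ Finset.Icc 1 n, ∫ t in x (i-1)..x i, (u' t - du i)^2 with hAdef
  set B := ∑ i ∈ Finset.Icc 1 n, (x i - x (i-1)) * de i^2 with hBdef
  have hsubI : ∀ i, 1 ≤ i → i ≤ n → Set.uIcc (x (i-1)) (x i) ⊆ Set.Icc (0:ℝ) 1 :=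
    fun i h1 h2 => Set.uIcc_subset_Icc (hx01 (i-1) (by omega)) (hx01 i h2)
  -- the sup bound on |u''|
  have hubd : ∀ t ∈ Set.Icc (0:ℝ) 1, |u'' t| ≤ K₀ := by
    intro t ht; rw [hueq t ht, abs_neg]; exact hKf t ht
  -- Pythagoras expansion
  have key_int : ∀ i, 1 ≤ i → i ≤ n →
      (∫ t in x (i-1)..x i, (u' t - (Wv i - Wv (i-1)) / (x i - x (i-1)))^2)
      = (∫ t in x (i-1)..x i, (u' t - du i)^2) + (x i - x (i-1)) * de i^2 := by
    intro i h1 h2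
    have hab : x (i-1) < x i := by linarith [hpos i h1 h2]
    have hsub := hsubI i h1 h2
    have ha := hx01 (i-1) (by omega)
    have hb := hx01 i h2
    have hdwi : dw i = (Wv i - Wv (i-1)) / (x i - x (i-1)) := by rw [hdw]
    have hdei : de i = du i - dw i := by rw [hde]
    have e1 : ∀ t : ℝ, (u' t - (Wv i - Wv (i-1)) / (x i - x (i-1)))^2
        = (u' t - du i)^2 + ((2 * de i) * (u' t - du i) + de i^2) := by
      intro t
      rw [← hdwi]
      have h3 : dw i = du i - de i := by rw [hdei]; ring
      rw [h3]; ring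
    have hcc : ContinuousOn (fun t => u' t - du i) (Set.uIcc (x (i-1)) (x i)) :=
      (hu'c.mono hsub).sub continuousOn_const
    have hi1 : IntervalIntegrable (fun t => (u' t - du i)^2) volume (x (i-1)) (x i) :=
      (hcc.pow 2).intervalIntegrable
    have hi2a : IntervalIntegrable (fun t => (2 * de i) * (u' t - du i)) volume (x (i-1)) (x i) :=
      (continuousOn_const.mul hcc).intervalIntegrable
    have hi2 : IntervalIntegrable (fun t => (2 * de i) * (u' t - du i) + de i^2)
        volume (x (i-1)) (x i) :=
      hi2a.add intervalIntegrable_const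
    rw [intervalIntegral.integral_congr (g := fun t =>
        (u' t - du i)^2 + ((2 * de i) * (u' t - du i) + de i^2)) (fun t _ => e1 t)]
    rw [intervalIntegral.integral_add hi1 hi2]
    congr 1
    rw [intervalIntegral.integral_add hi2a intervalIntegrable_const]
    rw [intervalIntegral.integral_const_mul, intervalIntegral.integral_const, smul_eq_mul]
    have hzero : (∫ t in x (i-1)..x i, (u' t - du i)) = 0 := by
      rw [intervalIntegral.integral_sub ((hu'c.mono hsub).intervalIntegrable)
        intervalIntegrable_const]
      rw [ftc01 hu hu'c ha hb, intervalIntegral.integral_const, smul_eq_mul]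
      rw [hdu]
      have hne : x i - x (i-1) ≠ 0 := ne_of_gt (hpos i h1 h2)
      field_simp
      ring
    rw [hzero, mul_zero, zero_add]
  -- sum splits
  have hsum : (∑ i ∈ Finset.Icc 1 n, ∫ t in x (i-1)..x i,
      (u' t - (Wv i - Wv (i-1)) / (x i - x (i-1)))^2) = A + B := by
    rw [hAdef, hBdef, ← Finset.sum_add_distrib]
    refine Finset.sum_congr rfl ?_
    intro i hi
    rw [Finset.mem_Icc] at hi
    exact key_int i hi.1 hi.2
  -- interpolation error bound
  have hA_bound : ∀ i, 1 ≤ i → i ≤ n →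
      (∫ t in x (i-1)..x i, (u' t - du i)^2) ≤ (K₀*H)^2 * (x i - x (i-1)) := by
    intro i h1 h2
    have hab : x (i-1) < x i := by linarith [hpos i h1 h2]
    have hsub := hsubI i h1 h2
    have ha := hx01 (i-1) (by omega)
    have hb := hx01 i h2
    have hIccsub : Set.Icc (x (i-1)) (x i) ⊆ Set.Icc (0:ℝ) 1 := Set.Icc_subset_Icc ha.1 hb.2
    obtain ⟨ξ, hξI, hξ⟩ := exists_hasDerivAt_eq_slope u u' hab (huc.mono hIccsub)
      (fun t ht => (hu t (hIccsub (Set.Ioo_subset_Icc_self ht))).hasDerivAt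
        (Icc_mem_nhds (lt_of_le_of_lt ha.1 ht.1) (lt_of_lt_of_le ht.2 hb.2)))
    have hξ01 : ξ ∈ Set.Icc (0:ℝ) 1 := hIccsub (Set.Ioo_subset_Icc_self hξI)
    have hsl : u' ξ = du i := by rw [hdu]; exact hξ
    have pointwise : ∀ t ∈ Set.Icc (x (i-1)) (x i), (u' t - du i)^2 ≤ (K₀*H)^2 := by
      intro t ht
      have ht01 := hIccsub ht
      have hftc : ∫ s in ξ..t, u'' s = u' t - u' ξ := ftc01 hu' hu''c hξ01 ht01
      have habs : |u' t - u' ξ| ≤ K₀ * H := by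
        rw [← hftc]
        have h := intervalIntegral.norm_integral_le_of_norm_le_const (C := K₀) (f := u'')
          (a := ξ) (b := t)
          (fun s hs => hubd s (Set.uIcc_subset_Icc hξ01 ht01 (Set.uIoc_subset_uIcc hs)))
        rw [Real.norm_eq_abs] at h
        refine le_trans h ?_
        have htx : |t - ξ| ≤ x i - x (i-1) := by
          rw [abs_sub_le_iff]
          constructor
          · linarith [ht.1, ht.2, hξI.1.le, hξI.2.le]
          · linarith [ht.1, ht.2, hξI.1.le, hξI.2.le]
        have h3 := hH1 i h1 h2
        have htx2 := htx
        nlinarith [hK₀0, abs_nonneg (t - ξ)]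
      calc (u' t - du i)^2 = |u' t - u' ξ|^2 := by rw [← hsl, sq_abs]
        _ ≤ (K₀*H)^2 := pow_le_pow_left₀ (abs_nonneg _) habs 2
    have hint1 : IntervalIntegrable (fun t => (u' t - du i)^2) volume (x (i-1)) (x i) :=
      (((hu'c.mono hsub).sub continuousOn_const).pow 2).intervalIntegrable
    calc (∫ t in x (i-1)..x i, (u' t - du i)^2)
        ≤ ∫ _ in x (i-1)..x i, (K₀*H)^2 :=
          intervalIntegral.integral_mono_on hab.le hint1
            intervalIntegrable_const pointwise
      _ = (K₀*H)^2 * (x i - x (i-1)) := by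
          rw [intervalIntegral.integral_const, smul_eq_mul]; ring
  have htel : ∑ i ∈ Finset.Icc 1 n, (x i - x (i-1)) = 1 := by
    rw [sum_Icc_one (fun i => x i - x (i-1)) n]
    simp only [Nat.add_sub_cancel]
    rw [Finset.sum_range_sub x n, hxn, hx0]
    ring
  have hAle : A ≤ (K₀*H)^2 := by
    calc A ≤ ∑ i ∈ Finset.Icc 1 n, (K₀*H)^2 * (x i - x (i-1)) := by
          refine Finset.sum_le_sum ?_
          intro i hi
          rw [Finset.mem_Icc] at hi
          exact hA_bound i hi.1 hi.2
      _ = (K₀*H)^2 * ∑ i ∈ Finset.Icc 1 n, (x i - x (i-1)) := by rw [Finset.mul_sum]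
      _ = (K₀*H)^2 := by rw [htel, mul_one]
  have hA0 : 0 ≤ A := by
    refine Finset.sum_nonneg ?_
    intro i hi
    rw [Finset.mem_Icc] at hi
    exact intervalIntegral.integral_nonneg (by linarith [hpos i hi.1 hi.2])
      (fun t _ => sq_nonneg _)
  have hsqrtA : Real.sqrt A ≤ K₀ * H := by
    calc Real.sqrt A ≤ Real.sqrt ((K₀*H)^2) := Real.sqrt_le_sqrt hAle
      _ = K₀ * H := Real.sqrt_sq (by positivity)
  -- the discrete weak form from the linear system
  have hW : ∀ p, 1 ≤ p → p ≤ n-1 →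
      dw p - dw (p+1) = ((x (p+1) - x (p-1))/2) * f (x p) := by
    intro p h1 h2
    have hj : p - 1 < n - 1 := by omega
    have hcomp := congrFun hw (⟨p-1, hj⟩ : Fin (n-1))
    rw [stiff_apply n hn x w ⟨p-1, hj⟩] at hcomp
    have hrhs : (weightMat n x).mulVec (fun j : Fin (n-1) => f (x ((j:ℕ)+1))) ⟨p-1, hj⟩
        = ((x ((p-1)+2) - x (p-1))/2) * f (x ((p-1)+1)) := by
      simp [weightMat, Matrix.mulVec_diagonal]
    rw [hrhs] at hcomp
    have e1 : ((⟨p-1, hj⟩ : Fin (n-1)) : ℕ) = p - 1 := rfl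
    have e2 : p - 1 + 1 = p := by omega
    have e3 : p - 1 + 2 = p + 1 := by omega
    rw [e1, e2, e3, ← hWv] at hcomp
    rw [hdw]
    simp only [Nat.add_sub_cancel]
    linear_combination hcomp
  -- the continuous weak form from the ODE
  have hU : ∀ p, 1 ≤ p → p ≤ n-1 →
      du p - du (p+1) = (∫ t in x (p-1)..x p, f t * ((t - x (p-1))/(x p - x (p-1))))
        + (∫ t in x p..x (p+1), f t * ((x (p+1) - t)/(x (p+1) - x p))) := by
    intro p h1 h2
    have ha := hx01 (p-1) (by omega)
    have hbm := hx01 p (by omega)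
    have hc := hx01 (p+1) (by omega)
    have hab1 : x (p-1) < x p := by linarith [hpos p h1 (by omega)]
    have hab2 : x p < x (p+1) := by
      have h := hpos (p+1) (by omega) (by omega)
      simp only [Nat.add_sub_cancel] at h
      linarith
    have hL := weak_left hu hu' hu''c hueq ha hbm hab1
    have hR := weak_right hu hu' hu''c hueq hbm hc hab2
    rw [hL, hR, hdu]
    simp only [Nat.add_sub_cancel]
    ring
  -- residual bound
  have hr : ∀ p, 1 ≤ p → p ≤ n-1 →
      |de p - de (p+1)| ≤ K * H * ((x p - x (p-1)) + (x (p+1) - x p)) := by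
    intro p h1 h2
    have ha := hx01 (p-1) (by omega)
    have hbm := hx01 p (by omega)
    have hc := hx01 (p+1) (by omega)
    have hab1 : x (p-1) < x p := by linarith [hpos p h1 (by omega)]
    have hab2 : x p < x (p+1) := by
      have h := hpos (p+1) (by omega) (by omega)
      simp only [Nat.add_sub_cancel] at h
      linarith
    have hq1 := quad_left hf hf'c hKf' ha hbm hab1
    have hq2 := quad_right hf hf'c hKf' hbm hc hab2
    have hident : de p - de (p+1) =
        ((∫ t in x (p-1)..x p, f t * ((t - x (p-1))/(x p - x (p-1))))
          - (x p - x (p-1))/2 * f (x p))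
        + ((∫ t in x p..x (p+1), f t * ((x (p+1) - t)/(x (p+1) - x p)))
          - (x (p+1) - x p)/2 * f (x p)) := by
      have h1' := hU p h1 h2
      have h2' := hW p h1 h2
      rw [hde]
      simp only
      linear_combination h1' - h2'
    rw [hident]
    have hh1H := hH1 p h1 (by omega)
    have hh2H : x (p+1) - x p ≤ H := by
      have h := hH1 (p+1) (by omega) (by omega)
      simpa using h
    have hp1 := hpos p h1 (by omega)
    have hp2 : 0 < x (p+1) - x p := by linarith
    calc |_ + _| ≤ |(∫ t in x (p-1)..x p, f t * ((t - x (p-1))/(x p - x (p-1))))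
          - (x p - x (p-1))/2 * f (x p)|
        + |(∫ t in x p..x (p+1), f t * ((x (p+1) - t)/(x (p+1) - x p)))
          - (x (p+1) - x p)/2 * f (x p)| := abs_add_le _ _
      _ ≤ K*(x p - x (p-1))^2 + K*(x (p+1) - x p)^2 := add_le_add hq1 hq2
      _ ≤ K * H * ((x p - x (p-1)) + (x (p+1) - x p)) := by
          nlinarith [mul_nonneg (mul_nonneg hK0 hp1.le) (sub_nonneg.2 hh1H),
            mul_nonneg (mul_nonneg hK0 hp2.le) (sub_nonneg.2 hh2H)]
  have hsumr : ∑ p ∈ Finset.Icc 1 (n-1), |de p - de (p+1)| ≤ 2*(K*H) := by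
    have hT1 : ∑ p ∈ Finset.Icc 1 (n-1), (x p - x (p-1)) = x (n-1) - x 0 := by
      rw [sum_Icc_one (fun p => x p - x (p-1)) (n-1)]
      simp only [Nat.add_sub_cancel]
      exact Finset.sum_range_sub x (n-1)
    have hT2 : ∑ p ∈ Finset.Icc 1 (n-1), (x (p+1) - x p) = x n - x 1 := by
      rw [sum_Icc_one (fun p => x (p+1) - x p) (n-1)]
      have h := Finset.sum_range_sub (fun i => x (i+1)) (n-1)
      rw [show n - 1 + 1 = n from by omega] at h
      exact h
    calc ∑ p ∈ Finset.Icc 1 (n-1), |de p - de (p+1)|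
        ≤ ∑ p ∈ Finset.Icc 1 (n-1), K * H * ((x p - x (p-1)) + (x (p+1) - x p)) := by
          refine Finset.sum_le_sum ?_
          intro p hp
          rw [Finset.mem_Icc] at hp
          exact hr p hp.1 hp.2
      _ = K * H * ((∑ p ∈ Finset.Icc 1 (n-1), (x p - x (p-1)))
            + ∑ p ∈ Finset.Icc 1 (n-1), (x (p+1) - x p)) := by
          rw [← Finset.mul_sum, Finset.sum_add_distrib]
      _ ≤ 2*(K*H) := by
          rw [hT1, hT2, hx0, hxn]
          have h1 : x (n-1) ≤ 1 := (hx01 (n-1) (by omega)).2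
          have h2 : 0 ≤ x 1 := (hx01 1 (by omega)).1
          nlinarith [mul_nonneg hK0 hHpos.le]
  -- boundary values
  have hE0 : dE 0 = 0 := by
    rw [hdE]
    simp only [hx0, hu0, hWv, extendVec_zero, sub_zero]
  have hEn : dE n = 0 := by
    rw [hdE]
    simp only [hxn, hu1, hWv, extendVec_top n w n le_rfl, sub_zero]
  have hEdiff : ∀ i, 1 ≤ i → i ≤ n → dE i - dE (i-1) = (x i - x (i-1)) * de i := by
    intro i h1 h2
    have hne : x i - x (i-1) ≠ 0 := ne_of_gt (hpos i h1 h2)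
    rw [hdE, hde, hdu, hdw]
    field_simp
    ring
  -- Abel summation
  have hB_eq : B = ∑ p ∈ Finset.Icc 1 (n-1), dE p * (de p - de (p+1)) := by
    have hstep1 : B = ∑ i ∈ Finset.Icc 1 n, de i * (dE i - dE (i-1)) := by
      rw [hBdef]
      refine Finset.sum_congr rfl ?_
      intro i hi
      rw [Finset.mem_Icc] at hi
      rw [hEdiff i hi.1 hi.2]
      ring
    have hstep2 : ∑ i ∈ Finset.Icc 1 n, de i * (dE i - dE (i-1))
        = (∑ i ∈ Finset.Icc 1 n, de i * dE i) - ∑ i ∈ Finset.Icc 1 n, de i * dE (i-1) := by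
      rw [← Finset.sum_sub_distrib]
      exact Finset.sum_congr rfl (fun i _ => by ring)
    have hS1 : ∑ i ∈ Finset.Icc 1 n, de i * dE i = ∑ i ∈ Finset.Icc 1 (n-1), de i * dE i := by
      have h := Finset.sum_Icc_succ_top (a := 1) (b := n-1) (by omega) (fun i => de i * dE i)
      rw [show n - 1 + 1 = n from by omega] at h
      rw [h, hEn, mul_zero, add_zero]
    have hS2 : ∑ i ∈ Finset.Icc 1 n, de i * dE (i-1)
        = ∑ p ∈ Finset.Icc 1 (n-1), de (p+1) * dE p := by
      rw [sum_Icc_one (fun i => de i * dE (i-1)) n]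
      simp only [Nat.add_sub_cancel]
      have h := Finset.sum_range_succ' (fun i => de (i+1) * dE i) (n-1)
      rw [show n - 1 + 1 = n from by omega] at h
      rw [h, hE0, mul_zero, add_zero, sum_Icc_one (fun p => de (p+1) * dE p) (n-1)]
    rw [hstep1, hstep2, hS1, hS2, ← Finset.sum_sub_distrib]
    exact Finset.sum_congr rfl (fun p _ => by ring)
  have hB0 : 0 ≤ B := by
    refine Finset.sum_nonneg ?_
    intro i hi
    rw [Finset.mem_Icc] at hi
    exact mul_nonneg (hpos i hi.1 hi.2).le (sq_nonneg _)
  -- discrete Sobolev bound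
  have hEbd : ∀ p, 1 ≤ p → p ≤ n-1 → |dE p| ≤ Real.sqrt B := by
    intro p h1 h2
    have htelE : dE p = ∑ i ∈ Finset.range p, (dE (i+1) - dE i) := by
      rw [Finset.sum_range_sub dE p, hE0, sub_zero]
    have hposr : ∀ i ∈ Finset.range p, 0 < x (i+1) - x i := by
      intro i hi
      rw [Finset.mem_range] at hi
      have h := hpos (i+1) (by omega) (by omega)
      simpa using h
    have hlink : ∀ i ∈ Finset.range p,
        Real.sqrt (x (i+1) - x i) * (Real.sqrt (x (i+1) - x i) * de (i+1))
        = dE (i+1) - dE i := by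
      intro i hi
      rw [Finset.mem_range] at hi
      have hp' := hposr i (Finset.mem_range.2 hi)
      rw [← mul_assoc, Real.mul_self_sqrt hp'.le]
      have h := hEdiff (i+1) (by omega) (by omega)
      simp only [Nat.add_sub_cancel] at h
      exact h.symm
    have hcs := Finset.sum_mul_sq_le_sq_mul_sq (Finset.range p)
      (fun i => Real.sqrt (x (i+1) - x i))
      (fun i => Real.sqrt (x (i+1) - x i) * de (i+1))
    have hinner : ∑ i ∈ Finset.range p,
        Real.sqrt (x (i+1) - x i) * (Real.sqrt (x (i+1) - x i) * de (i+1)) = dE p := by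
      rw [Finset.sum_congr rfl hlink, ← htelE]
    rw [hinner] at hcs
    have hr1 : ∀ i ∈ Finset.range p, (Real.sqrt (x (i+1) - x i))^2 = x (i+1) - x i :=
      fun i hi => Real.sq_sqrt (hposr i hi).le
    have hr2 : ∀ i ∈ Finset.range p,
        (Real.sqrt (x (i+1) - x i) * de (i+1))^2 = (x (i+1) - x i) * de (i+1)^2 := by
      intro i hi
      rw [mul_pow, Real.sq_sqrt (hposr i hi).le]
    rw [Finset.sum_congr rfl hr1, Finset.sum_congr rfl hr2] at hcs
    have hxp : ∑ i ∈ Finset.range p, (x (i+1) - x i) = x p := by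
      rw [Finset.sum_range_sub x p, hx0, sub_zero]
    rw [hxp] at hcs
    have hs2nn : 0 ≤ ∑ i ∈ Finset.range p, (x (i+1) - x i) * de (i+1)^2 :=
      Finset.sum_nonneg (fun i hi => mul_nonneg (hposr i hi).le (sq_nonneg _))
    have hsub2 : ∑ i ∈ Finset.range p, (x (i+1) - x i) * de (i+1)^2 ≤ B := by
      have hBr : B = ∑ i ∈ Finset.range n, (x (i+1) - x i) * de (i+1)^2 := by
        rw [hBdef, sum_Icc_one (fun i => (x i - x (i-1)) * de i^2) n]
        simp only [Nat.add_sub_cancel]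
      rw [hBr]
      refine Finset.sum_le_sum_of_subset_of_nonneg (Finset.range_subset_range.2 (by omega)) ?_
      intro i hi _
      rw [Finset.mem_range] at hi
      have h := hpos (i+1) (by omega) (by omega)
      simp only [Nat.add_sub_cancel] at h
      exact mul_nonneg h.le (sq_nonneg _)
    have hfin : dE p^2 ≤ B := by
      calc dE p^2 ≤ x p * ∑ i ∈ Finset.range p, (x (i+1) - x i) * de (i+1)^2 := hcs
        _ ≤ 1 * B := mul_le_mul (hx01 p (by omega)).2 hsub2 hs2nn zero_le_one
        _ = B := one_mul B
    rw [← Real.sqrt_sq_eq_abs]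
    exact Real.sqrt_le_sqrt hfin
  have hsqrtB : Real.sqrt B ≤ 2*(K*H) := by
    have h2KH : 0 ≤ 2*(K*H) := by positivity
    have h1 : B ≤ Real.sqrt B * (2*(K*H)) := by
      calc B = ∑ p ∈ Finset.Icc 1 (n-1), dE p * (de p - de (p+1)) := hB_eq
        _ ≤ ∑ p ∈ Finset.Icc 1 (n-1), Real.sqrt B * |de p - de (p+1)| := by
            refine Finset.sum_le_sum ?_
            intro p hp
            rw [Finset.mem_Icc] at hp
            calc dE p * (de p - de (p+1)) ≤ |dE p * (de p - de (p+1))| := le_abs_self _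
              _ = |dE p| * |de p - de (p+1)| := abs_mul _ _
              _ ≤ Real.sqrt B * |de p - de (p+1)| :=
                  mul_le_mul_of_nonneg_right (hEbd p hp.1 hp.2) (abs_nonneg _)
        _ = Real.sqrt B * ∑ p ∈ Finset.Icc 1 (n-1), |de p - de (p+1)| := by
            rw [Finset.mul_sum]
        _ ≤ Real.sqrt B * (2*(K*H)) :=
            mul_le_mul_of_nonneg_left hsumr (Real.sqrt_nonneg _)
    rcases eq_or_lt_of_le (Real.sqrt_nonneg B) with h | h
    · rw [← h]; exact h2KH
    · have hBB : Real.sqrt B * Real.sqrt B = B := Real.mul_self_sqrt hB0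
      have h2 : Real.sqrt B * Real.sqrt B ≤ Real.sqrt B * (2*(K*H)) := by
        rw [hBB]; exact h1
      exact le_of_mul_le_mul_left h2 h
  -- conclusion
  have hgoal : Real.sqrt (∑ i ∈ Finset.Icc 1 n, ∫ t in x (i-1)..x i,
      (u' t - (Wv i - Wv (i-1)) / (x i - x (i-1)))^2) ≤ 100 * H * (M + N) := by
    rw [hsum]
    have hstep : Real.sqrt (A + B) ≤ Real.sqrt A + Real.sqrt B := by
      have hle : A + B ≤ (Real.sqrt A + Real.sqrt B)^2 := by
        nlinarith [Real.sq_sqrt hA0, Real.sq_sqrt hB0,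
          mul_nonneg (Real.sqrt_nonneg A) (Real.sqrt_nonneg B)]
      calc Real.sqrt (A + B) ≤ Real.sqrt ((Real.sqrt A + Real.sqrt B)^2) :=
            Real.sqrt_le_sqrt hle
        _ = Real.sqrt A + Real.sqrt B := Real.sqrt_sq (by positivity)
    have hs3 : Real.sqrt 3 ≤ 2 := by
      nlinarith [Real.sq_sqrt (by norm_num : (0:ℝ) ≤ 3), Real.sqrt_nonneg 3]
    calc Real.sqrt (A + B) ≤ Real.sqrt A + Real.sqrt B := hstep
      _ ≤ K₀ * H + 2*(K*H) := add_le_add hsqrtA hsqrtB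
      _ ≤ 100 * H * (M + N) := by
          rw [hK₀def, hKdef]
          nlinarith [hHpos.le, hM0, hN0, hs3, mul_nonneg hM0 hHpos.le,
            mul_nonneg hN0 hHpos.le,
            mul_le_mul_of_nonneg_right hs3 (mul_nonneg hN0 hHpos.le)]
  exact hgoal
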